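/- Every positive integer solution of x² + y² + z² = 3xyz can be obtained from (1,1,1) by a finite sequence of the operations (a,b,c) ↦ (a, 3ab−c, b) and permutations of the entries. -/

import Mathlib

/-- One elementary move on Markov-like triples: either the branching move
`(a,b,c) ↦ (a, 3ab − c, b)` or a permutation of the entries. -/
def markovStep (t s : ℤ × ℤ × ℤ) : Prop :=
  ∃ a b c, t = (a, b, c) ∧
    (s = (a, 3 * a * b - c, b) ∨
      s = (a, b, c) ∨ s = (a, c, b) ∨ s = (b, a, c) ∨ s = (b, c, a) ∨
      s = (c, a, b) ∨ s = (c, b, a))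

lemma markov_aux : ∀ n : ℕ, ∀ x y z : ℤ, 0 < x → 0 < y → 0 < z →
    x ^ 2 + y ^ 2 + z ^ 2 = 3 * x * y * z → (x + y + z).toNat ≤ n →
    Relation.ReflTransGen markovStep (1, 1, 1) (x, y, z) := by
  intro n
  induction n with
  | zero => intro x y z hx hy hz _ hn; omega
  | succ n ih =>
    intro x y z hx hy hz heq hn
    have key : ∀ a b c : ℤ, 0 < a → 0 < b → 0 < c → b ≤ a → c ≤ b →
        a ^ 2 + b ^ 2 + c ^ 2 = 3 * a * b * c → a + b + c = x + y + z →
        Relation.ReflTransGen markovStep (1, 1, 1) (a, b, c) := by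
      intro a b c ha hb hc hba hcb heq' hsum
      by_cases h1 : a = 1
      · have hb1 : b = 1 := by omega
        have hc1 : c = 1 := by omega
        subst h1; subst hb1; subst hc1; exact .refl
      · have ha2 : 2 ≤ a := by omega
        -- first: b < a
        have hab : b < a := by
          rcases lt_or_eq_of_le hba with h | h
          · exact h
          · exfalso
            subst h
            have hca : c ≤ b := hcb
            have hcsq : c ^ 2 ≤ b ^ 2 := pow_le_pow_left₀ hc.le hca 2
            rcases eq_or_lt_of_le (show (1:ℤ) ≤ c by omega) with h' | h'
            · -- c = 1
              have hc1 : c = 1 := by omega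
              subst hc1
              have h4 : 4 ≤ b ^ 2 := by nlinarith
              nlinarith
            · -- c ≥ 2
              have hc2 : 2 ≤ c := by omega
              have h3 : 0 ≤ b ^ 2 * (c - 2) := mul_nonneg (sq_nonneg b) (by linarith)
              have h4 : 4 ≤ b ^ 2 := by nlinarith
              nlinarith
        set a' := 3 * b * c - a with ha'def
        have hprod : a * a' = b ^ 2 + c ^ 2 := by
          rw [ha'def]; linear_combination -heq'
        have hbc2 : 0 < b ^ 2 + c ^ 2 := by positivity
        have ha'pos : 0 < a' := by
          by_contra h
          push_neg at h
          have : a * a' ≤ 0 := mul_nonpos_of_nonneg_of_nonpos ha.le h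
          linarith
        -- f(b) ≤ 0
        have hb2c : b ^ 2 ≥ c := by nlinarith
        have hfb : 2 * b ^ 2 + c ^ 2 ≤ 3 * b ^ 2 * c := by
          have h1' : 0 ≤ 2 * b ^ 2 * (c - 1) := mul_nonneg (by positivity) (by linarith)
          have h2' : 0 ≤ c * (b ^ 2 - c) := mul_nonneg hc.le (by linarith)
          nlinarith
        have hfact : (b - a) * (b - a') = 2 * b ^ 2 + c ^ 2 - 3 * b ^ 2 * c := by
          rw [ha'def]; linear_combination -heq'
        have ha'b : a' ≤ b := by
          by_contra h
          push_neg at h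
          have : 0 < (b - a) * (b - a') := mul_pos_of_neg_of_neg (by linarith) (by linarith)
          linarith
        have heq2 : b ^ 2 + c ^ 2 + a' ^ 2 = 3 * b * c * a' := by
          rw [ha'def]; linear_combination heq'
        have hmeas : (b + c + a').toNat ≤ n := by omega
        have hreach := ih b c a' hb hc ha'pos heq2 hmeas
        have hstep1 : markovStep (b, c, a') (b, a, c) := by
          refine ⟨b, c, a', rfl, Or.inl ?_⟩
          have : 3 * b * c - a' = a := by rw [ha'def]; ring
          rw [this]
        have hstep2 : markovStep (b, a, c) (a, b, c) :=
          ⟨b, a, c, rfl, by tauto⟩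
        exact (hreach.tail hstep1).tail hstep2
    rcases le_total x y with hxy | hxy <;> rcases le_total y z with hyz | hyz <;>
      rcases le_total x z with hxz | hxz
    · exact (key z y x hz hy hx hyz hxy (by linear_combination heq) (by ring)).tail
        ⟨z, y, x, rfl, by tauto⟩
    · exact (key z y x hz hy hx hyz hxy (by linear_combination heq) (by ring)).tail
        ⟨z, y, x, rfl, by tauto⟩
    · exact (key y z x hy hz hx hyz hxz (by linear_combination heq) (by ring)).tail
        ⟨y, z, x, rfl, by tauto⟩
    · exact (key y x z hy hx hz hxy hxz (by linear_combination heq) (by ring)).tail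
        ⟨y, x, z, rfl, by tauto⟩
    · exact (key z x y hz hx hy hxz hxy (by linear_combination heq) (by ring)).tail
        ⟨z, x, y, rfl, by tauto⟩
    · exact (key x z y hx hz hy hxz hyz (by linear_combination heq) (by ring)).tail
        ⟨x, z, y, rfl, by tauto⟩
    · exact (key x y z hx hy hz hxy hyz (by linear_combination heq) (by ring)).tail
        ⟨x, y, z, rfl, by tauto⟩
    · exact (key x y z hx hy hz hxy hyz (by linear_combination heq) (by ring)).tail
        ⟨x, y, z, rfl, by tauto⟩

theorem markov_triples_from_one (x y z : ℤ)
    (hx : 0 < x) (hy : 0 < y) (hz : 0 < z)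
    (h : x ^ 2 + y ^ 2 + z ^ 2 = 3 * x * y * z) :
    Relation.ReflTransGen markovStep (1, 1, 1) (x, y, z) := by
  exact markov_aux (x + y + z).toNat x y z hx hy hz h le_rfl
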